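/- Minimal residual variance: among all X ∈ ℝ^{n×p} with XᵀX = 1 and XᵀZ = 0, the quantity σ²(X) = tr(QᵀCQ)/(n−d−p), where Q spans the orthogonal complement of col(Z) ⊕ col(X), is minimized by X̂ = U₂W_p, the top-p eigenvectors of C₂₂ lifted by U₂, and the minimal value is (1/(n−d−p)) Σ_{j=p+1}^{n−d} λ_j. -/

import Mathlib

open Matrix


/-- Reindex the filtered sum over `Fin e` to a sum over `Fin (e-p)`. -/
lemma aux_sum_filter_eq {e p : ℕ} (hpe : p < e) (f : Fin e → ℝ) :
    ∑ j ∈ Finset.univ.filter (fun j : Fin e => p ≤ (j : ℕ)), f j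
      = ∑ j : Fin (e - p), f ⟨p + j.1, by have := j.isLt; omega⟩ := by
  have hset : Finset.univ.filter (fun j : Fin e => p ≤ (j : ℕ))
      = Finset.image (fun k : Fin (e - p) => (⟨p + k.1, by have := k.isLt; omega⟩ : Fin e))
          Finset.univ := by
    ext a
    simp only [Finset.mem_filter, Finset.mem_univ, true_and, Finset.mem_image, Fin.ext_iff]
    constructor
    · intro h
      exact ⟨⟨a.1 - p, by have := a.isLt; omega⟩, by simp; omega⟩
    · rintro ⟨k, hk⟩
      omega
  rw [hset, Finset.sum_image]
  intro x _ y _ h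
  simp only [Fin.ext_iff] at h ⊢
  omega

/-- Abel-type bound: if `0 ≤ s ≤ 1`, `∑ s = e - p` and `l` is antitone then
`∑_{j ≥ p} l j ≤ ∑ l i * s i`. -/
lemma aux_key {e p : ℕ} (hpe : p < e) (l : Fin e → ℝ) (hl : Antitone l)
    (s : Fin e → ℝ) (hs0 : ∀ i, 0 ≤ s i) (hs1 : ∀ i, s i ≤ 1)
    (hsum : ∑ i, s i = ((e - p : ℕ) : ℝ)) :
    ∑ j ∈ Finset.univ.filter (fun j : Fin e => p ≤ (j : ℕ)), l j ≤ ∑ i, l i * s i := by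
  set c : ℝ := l ⟨p, hpe⟩ with hc
  set t : Fin e → ℝ := fun i => if p ≤ (i : ℕ) then (1 : ℝ) else 0 with ht
  have htsum : ∑ i, t i = ((e - p : ℕ) : ℝ) := by
    have := aux_sum_filter_eq hpe (fun _ => (1 : ℝ))
    rw [ht]
    rw [← Finset.sum_filter]
    rw [this]
    simp
  have hlt : ∑ j ∈ Finset.univ.filter (fun j : Fin e => p ≤ (j : ℕ)), l j = ∑ i, l i * t i := by
    rw [ht]
    simp_rw [mul_ite, mul_one, mul_zero]
    rw [← Finset.sum_filter]
  have hterm : ∀ i : Fin e, 0 ≤ (l i - c) * (s i - t i) := by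
    intro i
    by_cases h : p ≤ (i : ℕ)
    · have h1 : l i ≤ c := hl (show (⟨p, hpe⟩ : Fin e) ≤ i from h)
      have h2 : t i = 1 := by simp [ht, h]
      have := hs1 i
      nlinarith
    · have h1 : c ≤ l i := hl (show i ≤ (⟨p, hpe⟩ : Fin e) from by
        simp [Fin.le_def]; omega)
      have h2 : t i = 0 := by simp [ht, h]
      have := hs0 i
      nlinarith
  have hexp : ∑ i, (l i - c) * (s i - t i)
      = ∑ i, l i * s i - ∑ i, l i * t i - c * ∑ i, s i + c * ∑ i, t i := by
    rw [Finset.mul_sum, Finset.mul_sum, ← Finset.sum_sub_distrib, ← Finset.sum_sub_distrib,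
      ← Finset.sum_add_distrib]
    apply Finset.sum_congr rfl
    intros; ring
  have h0 : 0 ≤ ∑ i, (l i - c) * (s i - t i) := Finset.sum_nonneg fun i _ => hterm i
  rw [hexp, hsum, htsum] at h0
  rw [hlt]
  linarith

/-- Trace bound: for `M` with orthonormal columns, `tr(Mᵀ diag(l) M) ≥ ∑_{j≥p} l j`. -/
lemma aux_trace_bound {e p : ℕ} (hpe : p < e) (l : Fin e → ℝ) (hl : Antitone l)
    (M : Matrix (Fin e) (Fin (e - p)) ℝ) (hM : Mᵀ * M = 1) :
    ∑ j ∈ Finset.univ.filter (fun j : Fin e => p ≤ (j : ℕ)), l j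
      ≤ (Mᵀ * Matrix.diagonal l * M).trace := by
  set P : Matrix (Fin e) (Fin e) ℝ := M * Mᵀ with hPdef
  have hPsym : ∀ i k, P k i = P i k := by
    intro i k
    simp only [hPdef, Matrix.mul_apply, Matrix.transpose_apply]
    exact Finset.sum_congr rfl fun j _ => mul_comm _ _
  have hPP : P * P = P := by
    show M * Mᵀ * (M * Mᵀ) = M * Mᵀ
    rw [Matrix.mul_assoc, ← Matrix.mul_assoc Mᵀ M Mᵀ, hM, Matrix.one_mul]
  have hs0 : ∀ i, 0 ≤ P i i := by
    intro i
    simp only [hPdef, Matrix.mul_apply, Matrix.transpose_apply]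
    exact Finset.sum_nonneg fun j _ => mul_self_nonneg _
  have hs1 : ∀ i, P i i ≤ 1 := by
    intro i
    have h1 : ∑ k, P i k * P k i = P i i := by
      have := congrFun (congrFun hPP i) i
      simpa [Matrix.mul_apply] using this
    have h2 : (P i i) ^ 2 ≤ ∑ k, P i k * P k i := by
      have heq : ∀ k, P i k * P k i = (P i k) ^ 2 := fun k => by rw [hPsym i k]; ring
      simp_rw [heq]
      exact Finset.single_le_sum (f := fun k => (P i k) ^ 2)
        (fun k _ => sq_nonneg _) (Finset.mem_univ i)
    nlinarith [hs0 i]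
  have hsum : ∑ i, P i i = ((e - p : ℕ) : ℝ) := by
    have h1 : P.trace = (Mᵀ * M).trace := Matrix.trace_mul_comm M Mᵀ
    rw [hM] at h1
    simpa [Matrix.trace, Matrix.diag] using h1
  have htr : (Mᵀ * Matrix.diagonal l * M).trace = ∑ i, l i * P i i := by
    have h1 : (Mᵀ * Matrix.diagonal l * M).trace = (M * (Mᵀ * Matrix.diagonal l)).trace :=
      Matrix.trace_mul_comm _ M
    rw [h1, ← Matrix.mul_assoc]
    show (P * Matrix.diagonal l).trace = _
    simp only [Matrix.trace, Matrix.diag, Matrix.mul_apply, Matrix.diagonal_apply,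
      mul_ite, mul_zero, Finset.sum_ite_eq', Finset.mem_univ, if_true]
    exact Finset.sum_congr rfl fun i _ => mul_comm _ _
  rw [htr]
  exact aux_key hpe l hl (fun i => P i i) hs0 hs1 hsum

/-- Minimal residual variance: among all `X` with `XᵀX = 1`, `XᵀZ = 0`, the residual
variance `σ²(X) = tr(QᵀCQ)/(n−d−p)` (where `Q` is an orthonormal basis of the orthogonal
complement of `col(Z) ⊕ col(X)`) is minimized by `X̂ = U₂W_p`, with minimal value
`(1/(n−d−p)) ∑_{j=p+1}^{n−d} λ_j`. -/
theorem stmt17 {d e p : ℕ} (hpe : p < e)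
    (Z : Matrix (Fin (d + e)) (Fin d) ℝ) (U₂ : Matrix (Fin (d + e)) (Fin e) ℝ)
    (hZrank : IsUnit (Zᵀ * Z).det)
    (hU2 : U₂ᵀ * U₂ = 1) (hU2Z : U₂ᵀ * Z = 0)
    (hcomplete : Z * (Zᵀ * Z)⁻¹ * Zᵀ + U₂ * U₂ᵀ = 1)
    (C : Matrix (Fin (d + e)) (Fin (d + e)) ℝ) (hC : C.PosDef)
    (l : Fin e → ℝ) (W : Matrix (Fin e) (Fin e) ℝ)
    (hlanti : Antitone l) (hW : Wᵀ * W = 1) (hW' : W * Wᵀ = 1)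
    (hspec : U₂ᵀ * C * U₂ = W * Matrix.diagonal l * Wᵀ) :
    let σmin : ℝ := (∑ j ∈ Finset.univ.filter (fun j : Fin e => p ≤ (j : ℕ)), l j) / (e - p)
    let Wp : Matrix (Fin e) (Fin p) ℝ := fun i j => W i ⟨j.1, lt_trans j.2 hpe⟩
    let Xh : Matrix (Fin (d + e)) (Fin p) ℝ := U₂ * Wp
    (∀ (X : Matrix (Fin (d + e)) (Fin p) ℝ) (Q : Matrix (Fin (d + e)) (Fin (e - p)) ℝ),
        Xᵀ * X = 1 → Xᵀ * Z = 0 →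
        Qᵀ * Q = 1 → Qᵀ * Z = 0 → Qᵀ * X = 0 →
        σmin ≤ (Qᵀ * C * Q).trace / (e - p)) ∧
      ∃ Q : Matrix (Fin (d + e)) (Fin (e - p)) ℝ,
        Qᵀ * Q = 1 ∧ Qᵀ * Z = 0 ∧ Qᵀ * Xh = 0 ∧
        (Qᵀ * C * Q).trace / (e - p) = σmin := by
  intro σmin Wp Xh
  have hden : (0 : ℝ) < (e : ℝ) - (p : ℝ) := by
    have : (p : ℝ) < (e : ℝ) := by exact_mod_cast hpe
    linarith
  -- entrywise orthonormality of columns of W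
  have hWe : ∀ a b : Fin e, ∑ i, W i a * W i b = if a = b then 1 else 0 := by
    intro a b
    have h := congrFun (congrFun hW a) b
    simpa [Matrix.mul_apply, Matrix.one_apply, Matrix.transpose_apply] using h
  constructor
  · -- lower bound
    intro X Q hXX hXZ hQQ hQZ hQX
    have hZQ : Zᵀ * Q = 0 := by
      have := congrArg Matrix.transpose hQZ
      simpa [Matrix.transpose_mul] using this
    set V : Matrix (Fin e) (Fin (e - p)) ℝ := U₂ᵀ * Q with hV
    have hQ : Q = U₂ * V := by
      calc Q = 1 * Q := (Matrix.one_mul Q).symm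
        _ = (Z * (Zᵀ * Z)⁻¹ * Zᵀ + U₂ * U₂ᵀ) * Q := by rw [hcomplete]
        _ = Z * ((Zᵀ * Z)⁻¹ * (Zᵀ * Q)) + U₂ * (U₂ᵀ * Q) := by
            simp only [Matrix.add_mul, Matrix.mul_assoc]
        _ = U₂ * V := by rw [hZQ, Matrix.mul_zero, Matrix.mul_zero, zero_add, hV]
    set M : Matrix (Fin e) (Fin (e - p)) ℝ := Wᵀ * V with hM
    have hVV : Vᵀ * V = 1 := by
      have h1 : Vᵀ * V = Qᵀ * (U₂ * V) := by
        rw [hV]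
        simp only [Matrix.transpose_mul, Matrix.transpose_transpose, Matrix.mul_assoc]
      rw [h1, ← hQ, hQQ]
    have hMM : Mᵀ * M = 1 := by
      have h1 : Mᵀ * M = Vᵀ * (W * Wᵀ) * V := by
        rw [hM]
        simp only [Matrix.transpose_mul, Matrix.transpose_transpose, Matrix.mul_assoc]
      rw [h1, hW', Matrix.mul_one, hVV]
    have hQCQ : Qᵀ * C * Q = Mᵀ * Matrix.diagonal l * M := by
      have e1 : Qᵀ * C * Q = Vᵀ * (U₂ᵀ * C * U₂) * V := by
        rw [hQ]
        simp only [Matrix.transpose_mul, Matrix.mul_assoc]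
      rw [e1, hspec, hM]
      simp only [Matrix.transpose_mul, Matrix.transpose_transpose, Matrix.mul_assoc]
    rw [hQCQ]
    have hb := aux_trace_bound hpe l hlanti M hMM
    exact div_le_div_of_nonneg_right hb hden.le
  · -- minimizer
    set Wb : Matrix (Fin e) (Fin (e - p)) ℝ :=
      fun i j => W i ⟨p + j.1, by have := j.isLt; omega⟩ with hWbdef
    have hWbWb : Wbᵀ * Wb = 1 := by
      ext j k
      simp only [Matrix.mul_apply, Matrix.transpose_apply, Matrix.one_apply]
      simp only [hWbdef]
      rw [hWe]
      by_cases h : j = k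
      · subst h; simp
      · rw [if_neg h, if_neg]
        intro hc
        apply h
        have := congrArg Fin.val hc
        simp only at this
        exact Fin.ext (by omega)
    refine ⟨U₂ * Wb, ?_, ?_, ?_, ?_⟩
    · calc (U₂ * Wb)ᵀ * (U₂ * Wb) = Wbᵀ * (U₂ᵀ * U₂) * Wb := by
            simp only [Matrix.transpose_mul, Matrix.mul_assoc]
        _ = 1 := by rw [hU2, Matrix.mul_one, hWbWb]
    · calc (U₂ * Wb)ᵀ * Z = Wbᵀ * (U₂ᵀ * Z) := by
            simp only [Matrix.transpose_mul, Matrix.mul_assoc]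
        _ = 0 := by rw [hU2Z, Matrix.mul_zero]
    · have hWbWp : Wbᵀ * Wp = 0 := by
        ext j k
        simp only [Matrix.mul_apply, Matrix.transpose_apply, Matrix.zero_apply]
        simp only [hWbdef, Wp]
        rw [hWe]
        rw [if_neg]
        intro hc
        have := congrArg Fin.val hc
        simp only at this
        have := k.isLt
        omega
      calc (U₂ * Wb)ᵀ * (U₂ * Wp) = Wbᵀ * (U₂ᵀ * U₂) * Wp := by
            simp only [Matrix.transpose_mul, Matrix.mul_assoc]
        _ = 0 := by rw [hU2, Matrix.mul_one, hWbWp]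
    · -- trace computation
      set N : Matrix (Fin e) (Fin (e - p)) ℝ := Wᵀ * Wb with hNdef
      have hN : ∀ a j, N a j = if a = (⟨p + j.1, by have := j.isLt; omega⟩ : Fin e) then 1 else 0 := by
        intro a j
        simp only [hNdef, Matrix.mul_apply, Matrix.transpose_apply, hWbdef]
        exact hWe a _
      have hQCQ : (U₂ * Wb)ᵀ * C * (U₂ * Wb) = Nᵀ * Matrix.diagonal l * N := by
        have e1 : (U₂ * Wb)ᵀ * C * (U₂ * Wb) = Wbᵀ * (U₂ᵀ * C * U₂) * Wb := by
          simp only [Matrix.transpose_mul, Matrix.mul_assoc]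
        rw [e1, hspec, hNdef]
        simp only [Matrix.transpose_mul, Matrix.transpose_transpose, Matrix.mul_assoc]
      rw [hQCQ]
      have htr : (Nᵀ * Matrix.diagonal l * N).trace
          = ∑ j : Fin (e - p), l ⟨p + j.1, by have := j.isLt; omega⟩ := by
        have hentry : ∀ j : Fin (e - p), (Nᵀ * Matrix.diagonal l * N) j j
            = l ⟨p + j.1, by have := j.isLt; omega⟩ := by
          intro j
          simp only [Matrix.mul_apply, Matrix.transpose_apply, Matrix.diagonal_apply]
          simp only [hN, ite_mul, mul_ite, one_mul, mul_one, zero_mul, mul_zero]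
          simp [Finset.sum_ite_eq, Finset.sum_ite_eq']
        simp only [Matrix.trace, Matrix.diag]
        exact Finset.sum_congr rfl fun j _ => hentry j
      rw [htr]
      show _ = (∑ j ∈ Finset.univ.filter (fun j : Fin e => p ≤ (j : ℕ)), l j) / ((e : ℝ) - p)
      rw [aux_sum_filter_eq hpe l]
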